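/- arXiv:1907.06815 — 3 statements merged into one kernel-verified Lean document; each statement's English description precedes it below -/
import Mathlib

section
/- Let F be a regular family of finite subsets of ℕ containing all singletons, and let n ∈ ℕ be such that {n} is not maximal in F. Then there exists a sequence of finite sets G₁ < G₂ < ... (each Gᵢ entirely to the right of n, and Gᵢ entirely below G_{i+1}) such that |Gᵢ| ≤ |G_{i+1}| and Gᵢ ∪ {n} is maximal in F for every i. -/
/-- The Schreier family: the empty set together with all finite nonempty sets `F` of
positive integers with `|F| ≤ min F`. -/
def Schreier : Set (Finset ℕ) :=
  {F | F = ∅ ∨ ∃ h : F.Nonempty, (∀ n ∈ F, 0 < n) ∧ F.card ≤ F.min' h}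

/-- A family of finite subsets of `ℕ` is hereditary if it is closed under subsets. -/
def Hereditary (𝓕 : Set (Finset ℕ)) : Prop := ∀ F ∈ 𝓕, ∀ E ⊆ F, E ∈ 𝓕

/-- A family is spreading if it is stable under moving elements to the right. -/
def Spreading (𝓕 : Set (Finset ℕ)) : Prop :=
  ∀ F ∈ 𝓕, ∀ σ : ℕ → ℕ, (∀ n ∈ F, n ≤ σ n) →
    (∀ m ∈ F, ∀ n ∈ F, m < n → σ m < σ n) → F.image σ ∈ 𝓕

/-- A family is compact if, identified with a set of characteristic functions in the
Cantor space `ℕ → Bool`, it is closed (equivalently, compact). -/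
def CompactFamily (𝓕 : Set (Finset ℕ)) : Prop :=
  IsClosed {f : ℕ → Bool | ∃ F ∈ 𝓕, f = fun n => decide (n ∈ F)}

/-- A regular family: hereditary, spreading, compact, and containing all singletons. -/
def RegularFamily (𝓕 : Set (Finset ℕ)) : Prop :=
  Hereditary 𝓕 ∧ Spreading 𝓕 ∧ CompactFamily 𝓕 ∧ ∀ n : ℕ, {n} ∈ 𝓕

/-- `F` is a maximal member of `𝓕` with respect to inclusion. -/
def MaximalIn (𝓕 : Set (Finset ℕ)) (F : Finset ℕ) : Prop :=
  F ∈ 𝓕 ∧ ∀ G ∈ 𝓕, F ⊆ G → F = G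

open Filter

lemma no_chain {𝓕 : Set (Finset ℕ)} (hc : CompactFamily 𝓕) :
    ¬ ∃ C : ℕ → Finset ℕ, (∀ k, C k ∈ 𝓕) ∧ ∀ k, C k ⊂ C (k + 1) := by
  classical
  rintro ⟨C, hC, hmono⟩
  have hsub : ∀ k l, k ≤ l → C k ⊆ C l := by
    intro k l h
    induction l, h using Nat.le_induction with
    | base => exact subset_rfl
    | succ l hl ih => exact ih.trans (hmono l).subset
  set f : ℕ → Bool := fun m => decide (∃ k, m ∈ C k) with hf_def
  have hf : f ∈ {f : ℕ → Bool | ∃ F ∈ 𝓕, f = fun n => decide (n ∈ F)} := by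
    apply hc.mem_of_tendsto (f := fun k => fun m => decide (m ∈ C k)) (b := atTop)
    · rw [tendsto_pi_nhds]
      intro m
      apply tendsto_nhds_of_eventually_eq
      by_cases hm : ∃ k, m ∈ C k
      · obtain ⟨k₀, hk₀⟩ := hm
        filter_upwards [eventually_ge_atTop k₀] with k hk
        simp only [hf_def]
        simp [hsub k₀ k hk hk₀]; exact ⟨k₀, hk₀⟩
      · apply Eventually.of_forall
        intro k
        simp only [hf_def]
        have : m ∉ C k := fun h => hm ⟨k, h⟩
        simp [this, hm]
    · exact Eventually.of_forall fun k => ⟨C k, hC k, rfl⟩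
  obtain ⟨F, hF, hfF⟩ := hf
  have hsubF : ∀ k, C k ⊆ F := by
    intro k m hm
    have : f m = true := by simp [hf_def]; exact ⟨k, hm⟩
    rw [hfF] at this
    simpa using this
  have hcard : ∀ k, k ≤ (C k).card := by
    intro k
    induction k with
    | zero => omega
    | succ k ih => exact Nat.lt_of_le_of_lt ih (Finset.card_lt_card (hmono k))
  have h1 := hcard (F.card + 1)
  have h2 := Finset.card_le_card (hsubF (F.card + 1))
  omega

lemma exists_max (𝓖 : Set (Finset ℕ))
    (hnc : ¬ ∃ C : ℕ → Finset ℕ, (∀ k, C k ∈ 𝓖) ∧ ∀ k, C k ⊂ C (k + 1))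
    (F₀ : Finset ℕ) (h₀ : F₀ ∈ 𝓖) :
    ∃ F, F₀ ⊆ F ∧ F ∈ 𝓖 ∧ ∀ F' ∈ 𝓖, F ⊆ F' → F = F' := by
  classical
  by_contra h
  push_neg at h
  have key : ∀ F : Finset ℕ, F ∈ 𝓖 → F₀ ⊆ F → ∃ F', F' ∈ 𝓖 ∧ F ⊂ F' := by
    intro F hF h0
    obtain ⟨F', hF', hsub, hne⟩ := h F h0 hF
    exact ⟨F', hF', hsub.ssubset_of_ne hne⟩
  let T := {F : Finset ℕ // F ∈ 𝓖 ∧ F₀ ⊆ F}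
  let step : T → T := fun p =>
    ⟨(key p.1 p.2.1 p.2.2).choose, (key p.1 p.2.1 p.2.2).choose_spec.1,
      p.2.2.trans (key p.1 p.2.1 p.2.2).choose_spec.2.subset⟩
  have hstep : ∀ p : T, p.1 ⊂ (step p).1 := fun p => (key p.1 p.2.1 p.2.2).choose_spec.2
  let C : ℕ → T := fun k => step^[k] ⟨F₀, h₀, subset_rfl⟩
  apply hnc
  refine ⟨fun k => (C k).1, fun k => (C k).2.1, fun k => ?_⟩
  have : C (k + 1) = step (C k) := Function.iterate_succ_apply' step k _
  show (C k).1 ⊂ (C (k+1)).1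
  rw [this]
  exact hstep (C k)

lemma shift_lemma {𝓕 : Set (Finset ℕ)} (hspread : Spreading 𝓕) (n m B : ℕ)
    (hnB : n ≤ B) (hmB : m ≤ B) (hnm : n ≠ m) (F : Finset ℕ) (hFne : F.Nonempty)
    (hFgt : ∀ a ∈ F, B < a) (hS : insert n (insert m F) ∈ 𝓕) :
    insert n (insert (F.max' hFne + 1) F) ∈ 𝓕 := by
  classical
  set p := min n m with hp
  set q := max n m with hq
  set y := F.max' hFne + 1 with hy
  have hpq : p < q := min_lt_max.mpr hnm
  have hqB : q ≤ B := max_le hnB hmB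
  have hpn : p ≤ n := min_le_left n m
  have hymax : ∀ a ∈ F, a < y := fun a ha => Nat.lt_succ_of_le (F.le_max' a ha)
  have hyB : B < y := lt_trans (hFgt _ (F.max'_mem hFne)) (Nat.lt_succ_self _)
  -- successor map within F
  set next : ℕ → ℕ := fun x =>
    if h : (F.filter (x < ·)).Nonempty then (F.filter (x < ·)).min' h else y with hnext
  have hnext_gt : ∀ x ∈ F, x < next x ∧ next x ≤ y := by
    intro x hx
    rw [hnext]; dsimp only
    split
    · rename_i h
      have := (F.filter (x < ·)).min'_mem h
      simp only [Finset.mem_filter] at this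
      exact ⟨this.2, le_of_lt (hymax _ this.1)⟩
    · exact ⟨hymax x hx, le_refl y⟩
  have hnext_le : ∀ x, ∀ g ∈ F, x < g → next x ≤ g := by
    intro x g hg hxg
    rw [hnext]; dsimp only
    have hne : (F.filter (x < ·)).Nonempty := ⟨g, by simp [Finset.mem_filter, hg, hxg]⟩
    rw [dif_pos hne]
    exact Finset.min'_le _ g (by simp [Finset.mem_filter, hg, hxg])
  have hnext_memy : ∀ x, next x ∈ F ∨ next x = y := by
    intro x
    rw [hnext]; dsimp only
    split
    · rename_i h
      have := (F.filter (x < ·)).min'_mem h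
      simp only [Finset.mem_filter] at this
      exact Or.inl this.1
    · exact Or.inr rfl
  -- the spreading map
  set σ : ℕ → ℕ := fun x => if x = p then n else if x = q then F.min' hFne else next x
    with hσ
  have hminF : B < F.min' hFne := hFgt _ (F.min'_mem hFne)
  have hFq : ∀ a ∈ F, q < a := fun a ha => lt_of_le_of_lt hqB (hFgt a ha)
  have hσp : σ p = n := by rw [hσ]; simp
  have hσq : σ q = F.min' hFne := by rw [hσ]; simp [Nat.ne_of_gt hpq]
  have hσF : ∀ a ∈ F, σ a = next a := by
    intro a ha
    rw [hσ]; dsimp only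
    rw [if_neg (by have := hFq a ha; omega), if_neg (by have := hFq a ha; omega)]
  have hSset : insert n (insert m F) = insert p (insert q F) := by
    rw [hp, hq]
    rcases le_total n m with h | h
    · simp [min_eq_left h, max_eq_right h]
    · simp [min_eq_right h, max_eq_left h, Finset.insert_comm]
  have hmem : ∀ x ∈ insert n (insert m F), x = p ∨ x = q ∨ x ∈ F := by
    intro x hx
    rw [hSset] at hx
    simpa using hx
  have himg : (insert n (insert m F)).image σ ∈ 𝓕 := by
    apply hspread _ hS σ
    · intro x hx
      rcases hmem x hx with rfl | rfl | hxF
      · rw [hσp]; exact hpn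
      · rw [hσq]; omega
      · rw [hσF x hxF]; exact le_of_lt (hnext_gt x hxF).1
    · intro a ha b hb hab
      rcases hmem a ha with rfl | rfl | haF <;> rcases hmem b hb with rfl | rfl | hbF
      · omega
      · rw [hσp, hσq]; omega
      · rw [hσp, hσF b hbF]; have := hnext_gt b hbF; have := hFq b hbF; omega
      · omega
      · omega
      · rw [hσq, hσF b hbF]
        have h1 := hnext_gt b hbF
        have h2 := Finset.min'_le F b hbF
        omega
      · have := hFq a haF; omega
      · have := hFq a haF; omega
      · rw [hσF a haF, hσF b hbF]
        have h1 := hnext_le a b hbF hab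
        have h2 := (hnext_gt b hbF).1
        omega
  have himg_eq : (insert n (insert m F)).image σ = insert n (insert y F) := by
    apply Finset.Subset.antisymm
    · intro z hz
      simp only [Finset.mem_image] at hz
      obtain ⟨x, hx, rfl⟩ := hz
      rcases hmem x hx with rfl | rfl | hxF
      · rw [hσp]; simp
      · rw [hσq]; simp [F.min'_mem hFne]
      · rw [hσF x hxF]
        rcases hnext_memy x with h | h <;> simp [h]
    · intro z hz
      simp only [Finset.mem_insert] at hz
      have hpmem : p ∈ insert n (insert m F) := by rw [hSset]; simp
      have hqmem : q ∈ insert n (insert m F) := by rw [hSset]; simp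
      rcases hz with rfl | rfl | hzF
      · exact Finset.mem_image.mpr ⟨p, hpmem, hσp⟩
      · -- y = σ (max' F)
        refine Finset.mem_image.mpr ⟨F.max' hFne, by rw [hSset]; simp [F.max'_mem hFne], ?_⟩
        rw [hσF _ (F.max'_mem hFne), hnext]
        dsimp only
        rw [dif_neg]
        rintro ⟨g, hg⟩
        simp only [Finset.mem_filter] at hg
        exact absurd (F.le_max' g hg.1) (by omega)
      · -- z ∈ F
        by_cases hzmin : z = F.min' hFne
        · exact Finset.mem_image.mpr ⟨q, hqmem, by rw [hσq, hzmin]⟩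
        · have hlt : F.min' hFne < z := lt_of_le_of_ne (F.min'_le z hzF) (Ne.symm hzmin)
          have hfne' : (F.filter (· < z)).Nonempty :=
            ⟨F.min' hFne, by simp [Finset.mem_filter, F.min'_mem hFne, hlt]⟩
          set w := (F.filter (· < z)).max' hfne' with hw
          have hwmem : w ∈ F ∧ w < z := by
            have h := (F.filter (· < z)).max'_mem hfne'
            rw [Finset.mem_filter] at h
            exact h
          refine Finset.mem_image.mpr ⟨w, by rw [hSset]; simp [hwmem.1], ?_⟩
          rw [hσF w hwmem.1, hnext]
          dsimp only
          have hne2 : (F.filter (w < ·)).Nonempty :=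
            ⟨z, by simp [Finset.mem_filter, hzF, hwmem.2]⟩
          rw [dif_pos hne2]
          apply le_antisymm
          · exact Finset.min'_le _ z (by simp [Finset.mem_filter, hzF, hwmem.2])
          · apply Finset.le_min'
            intro g hg
            simp only [Finset.mem_filter] at hg
            by_contra hc
            push_neg at hc
            have : g ≤ w := Finset.le_max' _ g (by simp [Finset.mem_filter, hg.1]; omega)
            omega
  rw [← himg_eq]
  exact himg

/-- The relativized family of sets beyond `B` whose union with `{n}` lies in `𝓕`. -/
def relFam (𝓕 : Set (Finset ℕ)) (n B : ℕ) : Set (Finset ℕ) :=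
  {F | (∀ a ∈ F, B < a) ∧ insert n F ∈ 𝓕}

lemma relFam_no_chain {𝓕 : Set (Finset ℕ)} (hc : CompactFamily 𝓕) (n B : ℕ) (hnB : n ≤ B) :
    ¬ ∃ C : ℕ → Finset ℕ, (∀ k, C k ∈ relFam 𝓕 n B) ∧ ∀ k, C k ⊂ C (k + 1) := by
  rintro ⟨C, hC, hmono⟩
  apply no_chain hc
  refine ⟨fun k => insert n (C k), fun k => (hC k).2, fun k => ?_⟩
  constructor
  · exact Finset.insert_subset_insert n (hmono k).subset
  · intro hsub
    obtain ⟨x, hx1, hx2⟩ := Finset.exists_of_ssubset (hmono k)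
    have : x ∈ insert n (C k) := hsub (Finset.mem_insert_of_mem hx1)
    rcases Finset.mem_insert.mp this with rfl | hxk
    · exact absurd ((hC (k+1)).1 x hx1) (by omega)
    · exact hx2 hxk

lemma key_lemma {𝓕 : Set (Finset ℕ)} (hreg : RegularFamily 𝓕) (n B : ℕ) (hB : n ≤ B)
    (F : Finset ℕ) (hFne : F.Nonempty) (hF : F ∈ relFam 𝓕 n B)
    (hmax : ∀ F' ∈ relFam 𝓕 n B, F ⊆ F' → F = F') :
    MaximalIn 𝓕 (insert n F) := by
  obtain ⟨hFgt, hFmem⟩ := hF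
  refine ⟨hFmem, ?_⟩
  intro E hE hsub
  by_contra hne
  obtain ⟨m, hmE, hmni⟩ := Finset.exists_of_ssubset (hsub.ssubset_of_ne hne)
  simp only [Finset.mem_insert, not_or] at hmni
  obtain ⟨hmn, hmF⟩ := hmni
  have hSsub : insert n (insert m F) ⊆ E := by
    apply Finset.insert_subset (hsub (Finset.mem_insert_self n F))
    exact Finset.insert_subset hmE fun x hx => hsub (Finset.mem_insert_of_mem hx)
  have hS : insert n (insert m F) ∈ 𝓕 := hreg.1 E hE _ hSsub
  by_cases hmB : B < m
  · have heq := hmax (insert m F)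
      ⟨fun a ha => by rcases Finset.mem_insert.mp ha with rfl | h; exact hmB; exact hFgt a h, hS⟩
      (Finset.subset_insert m F)
    exact hmF (heq ▸ Finset.mem_insert_self m F)
  · push_neg at hmB
    have hT := shift_lemma hreg.2.1 n m B hB hmB (Ne.symm hmn) F hFne hFgt hS
    set y := F.max' hFne + 1 with hy
    have hyF : y ∉ F := fun h => absurd (F.le_max' y h) (by omega)
    have heq := hmax (insert y F)
      ⟨fun a ha => by
        rcases Finset.mem_insert.mp ha with rfl | h
        · exact lt_trans (hFgt _ (F.max'_mem hFne)) (Nat.lt_succ_self _)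
        · exact hFgt a h, hT⟩
      (Finset.subset_insert y F)
    exact hyF (heq ▸ Finset.mem_insert_self y F)

lemma step_lemma {𝓕 : Set (Finset ℕ)} (hreg : RegularFamily 𝓕) (n : ℕ)
    (G : Finset ℕ) (hne : G.Nonempty) (hgt : ∀ a ∈ G, n < a) (hmem : insert n G ∈ 𝓕) :
    ∃ G', G'.Nonempty ∧ (∀ a ∈ G', n < a) ∧ (∀ a ∈ G, ∀ b ∈ G', a < b) ∧
      G.card ≤ G'.card ∧ MaximalIn 𝓕 (insert n G') := by
  classical
  set B := G.max' hne with hB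
  have hnB : n < B := hgt _ (G.max'_mem hne)
  set σ : ℕ → ℕ := fun x => if x ≤ n then x else x + B with hσ
  have himg : (insert n G).image σ ∈ 𝓕 := by
    apply hreg.2.1 _ hmem σ
    · intro x hx
      rw [hσ]; dsimp only; split <;> omega
    · intro a ha b hb hab
      rcases Finset.mem_insert.mp ha with rfl | haG <;>
        rcases Finset.mem_insert.mp hb with rfl | hbG
      · omega
      · have := hgt b hbG; rw [hσ]; dsimp only
        rw [if_pos (le_refl a), if_neg (by omega)]; omega
      · have := hgt a haG; omega
      · have h1 := hgt a haG; have h2 := hgt b hbG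
        rw [hσ]; dsimp only
        rw [if_neg (by omega), if_neg (by omega)]; omega
  set H := G.image (· + B) with hH
  have himg_eq : (insert n G).image σ = insert n H := by
    rw [Finset.image_insert]
    congr 1
    · rw [hσ]; simp
    · apply Finset.image_congr
      intro x hx
      have := hgt x hx
      rw [hσ]; dsimp only; rw [if_neg (by omega)]
  have hHmem : insert n H ∈ 𝓕 := himg_eq ▸ himg
  have hHgt : ∀ a ∈ H, B < a := by
    intro a ha
    rw [hH] at ha
    obtain ⟨x, hx, rfl⟩ := Finset.mem_image.mp ha
    have := hgt x hx; omega
  have hHcard : H.card = G.card := Finset.card_image_of_injective _ (add_left_injective B)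
  obtain ⟨F, hHF, hFmem, hFmax⟩ :=
    exists_max (relFam 𝓕 n B) (relFam_no_chain hreg.2.2.1 n B (le_of_lt hnB)) H ⟨hHgt, hHmem⟩
  have hFne : F.Nonempty := (hne.image _).mono hHF
  refine ⟨F, hFne, ?_, ?_, ?_, key_lemma hreg n B (le_of_lt hnB) F hFne hFmem hFmax⟩
  · intro a ha
    exact lt_trans hnB (hFmem.1 a ha)
  · intro a ha b hb
    exact lt_of_le_of_lt (G.le_max' a ha) (hFmem.1 b hb)
  · calc G.card = H.card := hHcard.symm
      _ ≤ F.card := Finset.card_le_card hHF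

/-- If `{n}` is not maximal in a regular family `𝓕`, there is a sequence of finite sets
`n < G₁ < G₂ < ⋯` with nondecreasing cardinalities such that each `Gᵢ ∪ {n}` is maximal
in `𝓕`. -/
theorem regular_spreading_sequence (𝓕 : Set (Finset ℕ)) (hreg : RegularFamily 𝓕)
    (n : ℕ) (hn : ¬ MaximalIn 𝓕 {n}) :
    ∃ G : ℕ → Finset ℕ,
      (∀ i, (G i).Nonempty) ∧
      (∀ i, ∀ a ∈ G i, n < a) ∧
      (∀ i, ∀ a ∈ G i, ∀ b ∈ G (i + 1), a < b) ∧
      (∀ i, (G i).card ≤ (G (i + 1)).card) ∧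
      (∀ i, MaximalIn 𝓕 (insert n (G i))) := by
  classical
  obtain ⟨hhered, hspread, hcomp, hsing⟩ := hreg
  have hreg' : RegularFamily 𝓕 := ⟨hhered, hspread, hcomp, hsing⟩
  -- seed: some b > n with {n, b} ∈ 𝓕
  have hseed : ∃ b, n < b ∧ insert n {b} ∈ 𝓕 := by
    have h1 : ∃ E ∈ 𝓕, {n} ⊆ E ∧ {n} ≠ E := by
      by_contra h
      push_neg at h
      exact hn ⟨hsing n, h⟩
    obtain ⟨E, hE, hsubE, hneE⟩ := h1
    obtain ⟨m, hmE, hmn⟩ := Finset.exists_of_ssubset (hsubE.ssubset_of_ne hneE)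
    simp only [Finset.mem_singleton] at hmn
    have hnm : insert n {m} ∈ 𝓕 := by
      apply hhered E hE
      apply Finset.insert_subset (hsubE (Finset.mem_singleton_self n))
      simpa using hmE
    rcases lt_or_gt_of_ne hmn with hlt | hlt
    · -- m < n : spread {m, n} to {n, n+1}
      have hmain : Finset.image (fun x => if x = m then n else x + 1) (insert n {m}) ∈ 𝓕 := by
        apply hspread _ hnm
        · intro x hx
          simp only [Finset.mem_insert, Finset.mem_singleton] at hx
          rcases hx with rfl | rfl <;> split_ifs <;> omega
        · intro a ha b hb hab
          simp only [Finset.mem_insert, Finset.mem_singleton] at ha hb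
          rcases ha with rfl | rfl <;> rcases hb with rfl | rfl <;> split_ifs <;> omega
      refine ⟨n + 1, by omega, ?_⟩
      have himg : Finset.image (fun x => if x = m then n else x + 1) (insert n {m})
          = insert n {n + 1} := by
        rw [Finset.image_insert, Finset.image_singleton]
        rw [if_neg (by omega), if_pos rfl]
        exact Finset.pair_comm _ _
      rwa [himg] at hmain
    · exact ⟨m, hlt, hnm⟩
  obtain ⟨b, hbn, hbmem⟩ := hseed
  -- initial maximal set
  obtain ⟨F₀, hbF₀, hF₀mem, hF₀max⟩ :=
    exists_max (relFam 𝓕 n n) (relFam_no_chain hcomp n n le_rfl) {b}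
      ⟨by simpa using hbn, hbmem⟩
  have hF₀ne : F₀.Nonempty := ⟨b, hbF₀ (Finset.mem_singleton_self b)⟩
  have hQ₀ : F₀.Nonempty ∧ (∀ a ∈ F₀, n < a) ∧ MaximalIn 𝓕 (insert n F₀) :=
    ⟨hF₀ne, hF₀mem.1, key_lemma hreg' n n le_rfl F₀ hF₀ne hF₀mem hF₀max⟩
  -- recursion
  set Q : Finset ℕ → Prop := fun G => G.Nonempty ∧ (∀ a ∈ G, n < a) ∧ MaximalIn 𝓕 (insert n G)
    with hQ
  have hstep : ∀ G, Q G → ∃ G', Q G' ∧ (∀ a ∈ G, ∀ b ∈ G', a < b) ∧ G.card ≤ G'.card := by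
    intro G hG
    obtain ⟨h1, h2, h3⟩ := hG
    obtain ⟨G', c1, c2, c3, c4, c5⟩ := step_lemma hreg' n G h1 h2 h3.1
    exact ⟨G', ⟨c1, c2, c5⟩, c3, c4⟩
  let T := {G : Finset ℕ // Q G}
  let next : T → T := fun p => ⟨(hstep p.1 p.2).choose, (hstep p.1 p.2).choose_spec.1⟩
  let seq : ℕ → T := fun k => next^[k] ⟨F₀, hQ₀⟩
  have hsucc : ∀ i, seq (i + 1) = next (seq i) := fun i => Function.iterate_succ_apply' next i _
  refine ⟨fun i => (seq i).1, fun i => (seq i).2.1, fun i => (seq i).2.2.1, ?_, ?_,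
    fun i => (seq i).2.2.2⟩
  · intro i a ha b hb
    change b ∈ (seq (i+1)).1 at hb
    rw [hsucc i] at hb
    exact (hstep (seq i).1 (seq i).2).choose_spec.2.1 a ha b hb
  · intro i
    have := (hstep (seq i).1 (seq i).2).choose_spec.2.2
    calc ((seq i).1).card ≤ ((hstep (seq i).1 (seq i).2).choose).card := this
      _ = ((seq (i+1)).1).card := by rw [hsucc i]
end

section
/- Let F be a hereditary family of finite subsets of ℕ, and consider the combinatorial norm ‖x‖ = sup{∑_{i∈F} |x(i)| : F ∈ F} on finitely supported scalar sequences. For a finitely supported functional x* = ∑_{i∈A} θᵢ eᵢ* with each |θᵢ| = 1, the dual norm of x* equals 1 if A ∈ F, and is strictly greater than 1 if A ∉ F (in the latter case the dual norm is at least |A|/(|A|−1)). -/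
/-- The combinatorial norm `‖x‖ = sup { ∑_{i ∈ F} |x i| : F ∈ 𝓕 }` on `c₀₀`. -/
noncomputable def combNorm {𝕜 : Type*} [RCLike 𝕜] (𝓕 : Set (Finset ℕ)) (x : ℕ →₀ 𝕜) : ℝ :=
  sSup {r : ℝ | ∃ F ∈ 𝓕, r = ∑ i ∈ F, ‖x i‖}

/-- The dual norm `‖f‖ = sup { |f x| : ‖x‖ ≤ 1 }` of a linear functional on `c₀₀`. -/
noncomputable def dualNorm {𝕜 : Type*} [RCLike 𝕜] (𝓕 : Set (Finset ℕ))
    (f : (ℕ →₀ 𝕜) →ₗ[𝕜] 𝕜) : ℝ :=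
  sSup {r : ℝ | ∃ x : ℕ →₀ 𝕜, combNorm 𝓕 x ≤ 1 ∧ r = ‖f x‖}

section Aux

variable {𝕜 : Type*} [RCLike 𝕜]

lemma combNorm_bddAbove (𝓕 : Set (Finset ℕ)) (x : ℕ →₀ 𝕜) :
    BddAbove {r : ℝ | ∃ F ∈ 𝓕, r = ∑ i ∈ F, ‖x i‖} := by
  refine ⟨∑ i ∈ x.support, ‖x i‖, ?_⟩
  rintro r ⟨F, hF, rfl⟩
  calc ∑ i ∈ F, ‖x i‖ ≤ ∑ i ∈ F ∪ x.support, ‖x i‖ :=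
        Finset.sum_le_sum_of_subset_of_nonneg Finset.subset_union_left
          (fun i _ _ => norm_nonneg _)
    _ = ∑ i ∈ x.support, ‖x i‖ := by
        refine (Finset.sum_subset Finset.subset_union_right ?_).symm
        intro i _ hi
        simp [Finsupp.notMem_support_iff.mp hi]

lemma sum_le_combNorm {𝓕 : Set (Finset ℕ)} {F : Finset ℕ} (hF : F ∈ 𝓕) (x : ℕ →₀ 𝕜) :
    ∑ i ∈ F, ‖x i‖ ≤ combNorm 𝓕 x :=
  le_csSup (combNorm_bddAbove 𝓕 x) ⟨F, hF, rfl⟩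

lemma signedSum_apply (A : Finset ℕ) (θ : ℕ → 𝕜) (x : ℕ →₀ 𝕜) :
    (∑ i ∈ A, θ i • (Finsupp.lapply i : (ℕ →₀ 𝕜) →ₗ[𝕜] 𝕜)) x = ∑ i ∈ A, θ i * x i := by
  simp [Finsupp.lapply_apply, smul_eq_mul]

lemma norm_signedSum_apply_le (A : Finset ℕ) (θ : ℕ → 𝕜) (hθ : ∀ i ∈ A, ‖θ i‖ = 1)
    (x : ℕ →₀ 𝕜) :
    ‖(∑ i ∈ A, θ i • (Finsupp.lapply i : (ℕ →₀ 𝕜) →ₗ[𝕜] 𝕜)) x‖ ≤ ∑ i ∈ A, ‖x i‖ := by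
  rw [signedSum_apply]
  refine (norm_sum_le _ _).trans (le_of_eq ?_)
  refine Finset.sum_congr rfl fun i hi => ?_
  rw [norm_mul, hθ i hi, one_mul]

end Aux

/-- For a hereditary family and a sign-valued functional `∑_{i∈A} θᵢ eᵢ*`, the dual norm
is exactly `1` when `A ∈ 𝓕`, and at least `|A|/(|A|-1) > 1` when `A ∉ 𝓕`. -/
theorem dualNorm_signed_sum {𝕜 : Type*} [RCLike 𝕜] (𝓕 : Set (Finset ℕ))
    (hher : Hereditary 𝓕) (hempty : ∅ ∈ 𝓕) (hsing : ∀ n : ℕ, {n} ∈ 𝓕)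
    (A : Finset ℕ) (hA : A.Nonempty) (θ : ℕ → 𝕜) (hθ : ∀ i ∈ A, ‖θ i‖ = 1) :
    (A ∈ 𝓕 → dualNorm 𝓕 (∑ i ∈ A, θ i • (Finsupp.lapply i : (ℕ →₀ 𝕜) →ₗ[𝕜] 𝕜)) = 1) ∧
    (A ∉ 𝓕 →
      (A.card : ℝ) / ((A.card : ℝ) - 1) ≤
        dualNorm 𝓕 (∑ i ∈ A, θ i • (Finsupp.lapply i : (ℕ →₀ 𝕜) →ₗ[𝕜] 𝕜)) ∧
      1 < dualNorm 𝓕 (∑ i ∈ A, θ i • (Finsupp.lapply i : (ℕ →₀ 𝕜) →ₗ[𝕜] 𝕜))) := by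
  set f : (ℕ →₀ 𝕜) →ₗ[𝕜] 𝕜 := ∑ i ∈ A, θ i • (Finsupp.lapply i : (ℕ →₀ 𝕜) →ₗ[𝕜] 𝕜) with hf
  constructor
  · -- Case A ∈ 𝓕 : dual norm = 1
    intro hAF
    have hub : ∀ r ∈ {r : ℝ | ∃ x : ℕ →₀ 𝕜, combNorm 𝓕 x ≤ 1 ∧ r = ‖f x‖}, r ≤ 1 := by
      rintro r ⟨x, hx, rfl⟩
      calc ‖f x‖ ≤ ∑ i ∈ A, ‖x i‖ := norm_signedSum_apply_le A θ hθ x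
        _ ≤ combNorm 𝓕 x := sum_le_combNorm hAF x
        _ ≤ 1 := hx
    obtain ⟨j, hj⟩ := hA
    set x : ℕ →₀ 𝕜 := Finsupp.single j (starRingEnd 𝕜 (θ j)) with hxdef
    have hc : combNorm 𝓕 x ≤ 1 := by
      apply Real.sSup_le _ zero_le_one
      rintro r ⟨F, hF, rfl⟩
      calc ∑ i ∈ F, ‖x i‖ = ∑ i ∈ F, if j = i then (1 : ℝ) else 0 := by
            refine Finset.sum_congr rfl fun i _ => ?_
            simp only [hxdef, Finsupp.single_apply]
            split
            · rw [RCLike.norm_conj, hθ j hj]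
            · simp
        _ ≤ 1 := by rw [Finset.sum_ite_eq]; split <;> norm_num
    have hfx : f x = θ j * starRingEnd 𝕜 (θ j) := by
      rw [signedSum_apply]
      rw [Finset.sum_eq_single j]
      · simp [hxdef]
      · intro i hi hij
        simp [hxdef, Finsupp.single_apply, Ne.symm hij]
      · intro h; exact absurd hj h
    have hnfx : ‖f x‖ = 1 := by
      rw [hfx, norm_mul, RCLike.norm_conj, hθ j hj, one_mul]
    refine le_antisymm (Real.sSup_le hub zero_le_one) ?_
    have : (1 : ℝ) ∈ {r : ℝ | ∃ x : ℕ →₀ 𝕜, combNorm 𝓕 x ≤ 1 ∧ r = ‖f x‖} :=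
      ⟨x, hc, hnfx.symm⟩
    exact le_csSup ⟨1, hub⟩ this
  · -- Case A ∉ 𝓕
    intro hAnot
    have h1 : 1 ≤ A.card := hA.card_pos
    have hne1 : A.card ≠ 1 := by
      intro h
      obtain ⟨a, rfl⟩ := Finset.card_eq_one.mp h
      exact hAnot (hsing a)
    have hn2 : 2 ≤ A.card := by omega
    set m : ℕ := A.card - 1 with hmdef
    have hm1 : 1 ≤ m := by omega
    have hmR : (m : ℝ) = (A.card : ℝ) - 1 := by
      rw [hmdef, Nat.cast_sub h1, Nat.cast_one]
    have hmpos : (0 : ℝ) < m := by exact_mod_cast hm1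
    set x : ℕ →₀ 𝕜 :=
      Finsupp.indicator A (fun i _ => ((m : 𝕜))⁻¹ * starRingEnd 𝕜 (θ i)) with hxdef
    have hxval : ∀ i, ‖x i‖ = if i ∈ A then ((m : ℝ))⁻¹ else 0 := by
      intro i
      simp only [hxdef, Finsupp.indicator_apply]
      split
      · rw [norm_mul, norm_inv, RCLike.norm_natCast, RCLike.norm_conj, hθ i ‹_›, mul_one]
      · simp
    have hc : combNorm 𝓕 x ≤ 1 := by
      apply Real.sSup_le _ zero_le_one
      rintro r ⟨F, hF, rfl⟩
      have hsub : F ∩ A ∈ 𝓕 := hher F hF _ Finset.inter_subset_left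
      have hneA : F ∩ A ≠ A := fun h => hAnot (h ▸ hsub)
      have hss : F ∩ A ⊂ A := lt_of_le_of_ne Finset.inter_subset_right hneA
      have hcard : ((F ∩ A).card : ℝ) ≤ (m : ℝ) := by
        have := Finset.card_lt_card hss
        exact_mod_cast by omega
      calc ∑ i ∈ F, ‖x i‖ = ∑ i ∈ F, if i ∈ A then ((m : ℝ))⁻¹ else 0 :=
            Finset.sum_congr rfl fun i _ => hxval i
        _ = ∑ i ∈ F ∩ A, ((m : ℝ))⁻¹ := by rw [Finset.sum_ite_mem]
        _ = ((F ∩ A).card : ℝ) * ((m : ℝ))⁻¹ := by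
            rw [Finset.sum_const, nsmul_eq_mul]
        _ ≤ (m : ℝ) * ((m : ℝ))⁻¹ :=
            mul_le_mul_of_nonneg_right hcard (by positivity)
        _ = 1 := mul_inv_cancel₀ (ne_of_gt hmpos)
    have hfx : f x = (A.card : 𝕜) * ((m : 𝕜))⁻¹ := by
      rw [signedSum_apply]
      have : ∀ i ∈ A, θ i * x i = ((m : 𝕜))⁻¹ := by
        intro i hi
        simp only [hxdef, Finsupp.indicator_apply, dif_pos hi]
        rw [mul_comm ((m : 𝕜))⁻¹ _, ← mul_assoc, RCLike.mul_conj]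
        rw [hθ i hi]
        norm_num
      rw [Finset.sum_congr rfl this, Finset.sum_const, nsmul_eq_mul]
    have hnfx : ‖f x‖ = (A.card : ℝ) / ((A.card : ℝ) - 1) := by
      rw [hfx, norm_mul, norm_inv, RCLike.norm_natCast, RCLike.norm_natCast, ← hmR,
        div_eq_mul_inv]
    have hbdd : BddAbove {r : ℝ | ∃ x : ℕ →₀ 𝕜, combNorm 𝓕 x ≤ 1 ∧ r = ‖f x‖} := by
      refine ⟨(A.card : ℝ), ?_⟩
      rintro r ⟨y, hy, rfl⟩
      calc ‖f y‖ ≤ ∑ i ∈ A, ‖y i‖ := norm_signedSum_apply_le A θ hθ y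
        _ ≤ ∑ _i ∈ A, (1 : ℝ) := by
            refine Finset.sum_le_sum fun i _ => ?_
            have : ∑ k ∈ ({i} : Finset ℕ), ‖y k‖ ≤ combNorm 𝓕 y :=
              sum_le_combNorm (hsing i) y
            simpa using this.trans hy
        _ = (A.card : ℝ) := by simp
    have hge : (A.card : ℝ) / ((A.card : ℝ) - 1) ≤ dualNorm 𝓕 f :=
      le_csSup hbdd ⟨x, hc, hnfx.symm⟩
    refine ⟨hge, lt_of_lt_of_le ?_ hge⟩
    rw [one_lt_div (by rw [← hmR]; exact hmpos)]
    linarith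
end

section
/- For every countable ordinal α, the Schreier family S_α is spreading: if F ∈ S_α and σ : F → ℕ is an injective order-preserving map with σ(n) ≥ n for all n ∈ F, then σ(F) ∈ S_α. -/
/-- The successor step of the Schreier hierarchy: admissible unions of sets of the
previous family. -/
def SchreierSucc (𝓐 : Set (Finset ℕ)) : Set (Finset ℕ) :=
  {F | F = ∅ ∨ ∃ (k : ℕ) (E : Fin k → Finset ℕ) (hne : ∀ j, (E j).Nonempty),
    (∀ j, E j ∈ 𝓐) ∧
    (∀ j j' : Fin k, j < j' → ∀ a ∈ E j, ∀ b ∈ E j', a < b) ∧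
    (Finset.univ.image (fun j => (E j).min' (hne j)) ∈ Schreier) ∧
    F = Finset.univ.biUnion E}

/-- A system of Schreier families `S_α`, with a fixed choice, for each countable limit
ordinal, of an increasing sequence of ordinals converging to it. -/
structure SchreierSystem where
  fam : Ordinal → Set (Finset ℕ)
  approx : Ordinal → ℕ → Ordinal
  one_eq : fam 1 = Schreier
  succ_eq : ∀ α : Ordinal, fam (α + 1) = SchreierSucc (fam α)
  approx_pos : ∀ α : Ordinal, ∀ n : ℕ, 1 ≤ approx α n
  approx_strictMono : ∀ α : Ordinal, Order.IsSuccLimit α → α.card ≤ Cardinal.aleph0 →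
    StrictMono (approx α)
  approx_lt : ∀ α : Ordinal, Order.IsSuccLimit α → α.card ≤ Cardinal.aleph0 → ∀ n, approx α n < α
  approx_sup : ∀ α : Ordinal, Order.IsSuccLimit α → α.card ≤ Cardinal.aleph0 →
    (⨆ n, approx α n) = α
  limit_eq : ∀ α : Ordinal, Order.IsSuccLimit α → α.card ≤ Cardinal.aleph0 →
    fam α = {F | F = ∅ ∨ ∃ h : F.Nonempty, ∃ n : ℕ,
      1 ≤ n ∧ n ≤ F.min' h ∧ F ∈ fam (approx α n)}

lemma min'_le_min'_image (F : Finset ℕ) (h : F.Nonempty) (σ : ℕ → ℕ)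
    (hσ : ∀ n ∈ F, n ≤ σ n) : F.min' h ≤ (F.image σ).min' (h.image σ) := by
  obtain ⟨m, hm, hmeq⟩ := Finset.mem_image.mp ((F.image σ).min'_mem (h.image σ))
  calc F.min' h ≤ m := Finset.min'_le _ _ hm
    _ ≤ σ m := hσ m hm
    _ = _ := hmeq

lemma min'_image_eq (F : Finset ℕ) (h : F.Nonempty) (σ : ℕ → ℕ)
    (hmono : ∀ m ∈ F, ∀ n ∈ F, m < n → σ m < σ n) :
    (F.image σ).min' (h.image σ) = σ (F.min' h) := by
  apply le_antisymm
  · exact Finset.min'_le _ _ (Finset.mem_image_of_mem σ (F.min'_mem h))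
  · apply Finset.le_min'
    intro y hy
    obtain ⟨m, hm, rfl⟩ := Finset.mem_image.mp hy
    rcases eq_or_lt_of_le (F.min'_le m hm) with he | hlt
    · rw [he]
    · exact (hmono _ (F.min'_mem h) _ hm hlt).le

lemma schreier_spreading : Spreading Schreier := by
  intro F hF σ hσ hmono
  rcases hF with rfl | ⟨h, hpos, hcard⟩
  · left; simp
  · right
    refine ⟨h.image σ, ?_, ?_⟩
    · intro n hn
      obtain ⟨m, hm, rfl⟩ := Finset.mem_image.mp hn
      exact lt_of_lt_of_le (hpos m hm) (hσ m hm)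
    · have hinj : Set.InjOn σ F := by
        intro a ha b hb hab
        by_contra hne
        rcases lt_or_gt_of_ne hne with hl | hl
        · exact absurd hab (hmono a ha b hb hl).ne
        · exact absurd hab.symm (hmono b hb a ha hl).ne
      rw [Finset.card_image_of_injOn hinj]
      exact hcard.trans (min'_le_min'_image F h σ hσ)

lemma succ_spreading (𝓐 : Set (Finset ℕ)) (hA : Spreading 𝓐) :
    Spreading (SchreierSucc 𝓐) := by
  intro F hF σ hσ hmono
  rcases hF with rfl | ⟨k, E, hne, hEA, hord, hmins, rfl⟩
  · left; simp
  · right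
    have hsub : ∀ j : Fin k, ∀ n ∈ E j, n ∈ Finset.univ.biUnion E := by
      intro j n hn
      exact Finset.mem_biUnion.mpr ⟨j, Finset.mem_univ j, hn⟩
    refine ⟨k, fun j => (E j).image σ, fun j => (hne j).image σ, ?_, ?_, ?_, ?_⟩
    · intro j
      exact hA (E j) (hEA j) σ (fun n hn => hσ n (hsub j n hn))
        (fun m hm n hn h => hmono m (hsub j m hm) n (hsub j n hn) h)
    · intro j j' hjj' a ha b hb
      obtain ⟨a₀, ha₀, rfl⟩ := Finset.mem_image.mp ha
      obtain ⟨b₀, hb₀, rfl⟩ := Finset.mem_image.mp hb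
      exact hmono a₀ (hsub j a₀ ha₀) b₀ (hsub j' b₀ hb₀) (hord j j' hjj' a₀ ha₀ b₀ hb₀)
    · have heq : (Finset.univ.image fun j => ((E j).image σ).min' ((hne j).image σ))
          = (Finset.univ.image fun j => (E j).min' (hne j)).image σ := by
        rw [Finset.image_image]
        apply Finset.image_congr
        intro j _
        exact min'_image_eq (E j) (hne j) σ
          (fun m hm n hn h => hmono m (hsub j m hm) n (hsub j n hn) h)
      rw [heq]
      have hminsub : ∀ n ∈ Finset.univ.image fun j => (E j).min' (hne j),
          n ∈ Finset.univ.biUnion E := by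
        intro n hn
        obtain ⟨j, _, rfl⟩ := Finset.mem_image.mp hn
        exact hsub j _ ((E j).min'_mem (hne j))
      exact schreier_spreading _ hmins σ (fun n hn => hσ n (hminsub n hn))
        (fun m hm n hn h => hmono m (hminsub m hm) n (hminsub n hn) h)
    · ext x
      simp only [Finset.mem_image, Finset.mem_biUnion, Finset.mem_univ, true_and]
      constructor
      · rintro ⟨a, ⟨j, ha⟩, rfl⟩; exact ⟨j, a, ha, rfl⟩
      · rintro ⟨j, a, ha, rfl⟩; exact ⟨a, ⟨j, ha⟩, rfl⟩

/-- Every Schreier family `S_α` of countable order `α ≥ 1` is spreading. -/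
theorem schreierFamily_spreading (sys : SchreierSystem) (α : Ordinal)
    (h1 : 1 ≤ α) (hc : α.card ≤ Cardinal.aleph0) :
    Spreading (sys.fam α) := by
  induction α using Ordinal.induction with
  | _ α IH =>
  rcases Ordinal.zero_or_succ_or_isSuccLimit α with h0 | ⟨β, rfl⟩ | hlim
  · subst h0; simp at h1
  · rw [show Order.succ β = β + 1 from (Ordinal.add_one_eq_succ β).symm] at *
    by_cases hβ : β = 0
    · subst hβ
      rw [show (0 : Ordinal) + 1 = 1 from zero_add 1, sys.one_eq]
      exact schreier_spreading
    · have hβ1 : 1 ≤ β := Ordinal.one_le_iff_ne_zero.mpr hβ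
      rw [sys.succ_eq]
      exact succ_spreading _ (IH β (Order.lt_succ β) hβ1
        ((Ordinal.card_le_card (Order.le_succ β)).trans hc))
  · rw [sys.limit_eq α hlim hc]
    intro F hF σ hσ hmono
    rcases hF with rfl | ⟨hne, n, hn1, hn2, hmem⟩
    · left; simp
    · right
      refine ⟨hne.image σ, n, hn1, hn2.trans (min'_le_min'_image F hne σ hσ), ?_⟩
      have hlt := sys.approx_lt α hlim hc n
      exact IH (sys.approx α n) hlt (sys.approx_pos α n)
        ((Ordinal.card_le_card hlt.le).trans hc) F hmem σ hσ hmono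
end
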